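/- Let H be a real inner product space, V a finite index set, q_v > 0 weights with ∑_{v∈V} q_v = 1, θ > 0, and P_v ≥ 0 coefficients with P_v ≤ θ·q_v for all v. Let η > 0, G ≥ 0, let E ≥ 1 be an integer, and let g_v^t ∈ H with ‖g_v^t‖ ≤ G for all v ∈ V and t = 0, …, E−1. Define w_v^0 = u, w_v^{t+1} = w_v^t − η·g_v^t, and w̄^0 = u, w̄^{t+1} = w̄^t − η·∑_{v∈V} P_v·g_v^t. Then for every t with 0 ≤ t ≤ E: ∑_{v∈V} P_v·‖w̄^t − w_v^t‖² ≤ η²·E²·G²·( θ·(∑_{v∈V} P_v − 1)² + ∑_{v∈V} P_v ). -/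

import Mathlib

/-- Bound on the weighted discrepancy between the virtual global iterate `w̄ t` and the
local iterates `w v t` during one global round of `E` local epochs with learning rate `η`,
under bounded directions `‖g v t‖ ≤ G` and coefficients `0 ≤ P v ≤ θ * q v` where the
weights `q v > 0` sum to one:
`∑ v, P v * ‖w̄ t − w v t‖² ≤ η² E² G² (θ (∑ v, P v − 1)² + ∑ v, P v)` for all `t ≤ E`. -/
theorem stmt6 {H : Type*} [NormedAddCommGroup H] [InnerProductSpace ℝ H]
    {V : Type*} [Fintype V]
    (q : V → ℝ) (hq : ∀ v, 0 < q v) (hqsum : ∑ v, q v = 1)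
    (θ : ℝ) (hθ : 0 < θ)
    (P : V → ℝ) (hP0 : ∀ v, 0 ≤ P v) (hPθ : ∀ v, P v ≤ θ * q v)
    (η : ℝ) (hη : 0 < η) (G : ℝ) (hG : 0 ≤ G)
    (E : ℕ) (hE : 1 ≤ E)
    (g : V → ℕ → H) (hg : ∀ v, ∀ t < E, ‖g v t‖ ≤ G)
    (u : H) (w : V → ℕ → H) (wbar : ℕ → H)
    (hw0 : ∀ v, w v 0 = u)
    (hw : ∀ v, ∀ t < E, w v (t + 1) = w v t - η • g v t)
    (hwbar0 : wbar 0 = u)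
    (hwbar : ∀ t < E, wbar (t + 1) = wbar t - η • ∑ v, P v • g v t) :
    ∀ t ≤ E, ∑ v, P v * ‖wbar t - w v t‖ ^ 2
      ≤ η ^ 2 * (E : ℝ) ^ 2 * G ^ 2 * (θ * (∑ v, P v - 1) ^ 2 + ∑ v, P v) := by
  intro t ht
  classical
  set S := ∑ v, P v with hSdef
  have hS0 : 0 ≤ S := Finset.sum_nonneg fun v _ => hP0 v
  have hSθ : S ≤ θ := by
    calc S ≤ ∑ v, θ * q v := Finset.sum_le_sum fun v _ => hPθ v
    _ = θ := by rw [← Finset.mul_sum, hqsum, mul_one]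
  -- closed forms
  have hwform : ∀ s ≤ E, ∀ v, w v s = u - η • ∑ i ∈ Finset.range s, g v i := by
    intro s hs
    induction s with
    | zero => intro v; simp [hw0 v]
    | succ n ih =>
      intro v
      have hn : n < E := Nat.lt_of_succ_le hs
      rw [hw v n hn, ih (le_of_lt hn) v, Finset.sum_range_succ, smul_add, sub_sub]
  have hwbarform : ∀ s ≤ E, wbar s = u - η • ∑ i ∈ Finset.range s, ∑ v, P v • g v i := by
    intro s hs
    induction s with
    | zero => simp [hwbar0]
    | succ n ih =>
      have hn : n < E := Nat.lt_of_succ_le hs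
      rw [hwbar n hn, ih (le_of_lt hn), Finset.sum_range_succ, smul_add, sub_sub]
  set y : V → H := fun v => ∑ i ∈ Finset.range t, g v i with hy
  set c : H := ∑ v, P v • y v with hc
  have hdiff : ∀ v, wbar t - w v t = η • (y v - c) := by
    intro v
    rw [hwbarform t ht, hwform t ht v]
    have : ∑ i ∈ Finset.range t, ∑ v, P v • g v i = c := by
      rw [hc, Finset.sum_comm]
      simp [hy, Finset.smul_sum]
    rw [this]
    simp [smul_sub, hy]
  set K : ℝ := (E : ℝ) * G with hK
  have hK0 : 0 ≤ K := mul_nonneg (Nat.cast_nonneg E) hG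
  have hyb : ∀ v, ‖y v‖ ≤ K := by
    intro v
    calc ‖y v‖ ≤ ∑ i ∈ Finset.range t, ‖g v i‖ := norm_sum_le _ _
    _ ≤ ∑ i ∈ Finset.range t, G := Finset.sum_le_sum fun i hi =>
        hg v i (lt_of_lt_of_le (Finset.mem_range.mp hi) ht)
    _ = (t : ℝ) * G := by simp [mul_comm]
    _ ≤ K := by
        apply mul_le_mul_of_nonneg_right _ hG
        exact_mod_cast ht
  have hcb : ‖c‖ ≤ S * K := by
    calc ‖c‖ ≤ ∑ v, ‖P v • y v‖ := norm_sum_le _ _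
    _ ≤ ∑ v, P v * K := by
        apply Finset.sum_le_sum
        intro v _
        rw [norm_smul, Real.norm_eq_abs, abs_of_nonneg (hP0 v)]
        exact mul_le_mul_of_nonneg_left (hyb v) (hP0 v)
    _ = S * K := by rw [← Finset.sum_mul]
  -- key identity
  have hkey : ∑ v, P v * ‖y v - c‖ ^ 2
      = (∑ v, P v * ‖y v‖ ^ 2) + (S - 2) * ‖c‖ ^ 2 := by
    have hinner : ∑ v, P v * (inner ℝ (y v) c : ℝ) = ‖c‖ ^ 2 := by
      have : ∑ v, P v * (inner ℝ (y v) c : ℝ) = (inner ℝ c c : ℝ) := by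
        rw [hc, sum_inner]
        exact Finset.sum_congr rfl fun v _ => (real_inner_smul_left (y v) c (P v)).symm
      rw [this, real_inner_self_eq_norm_sq]
    have hexp : ∀ v, P v * ‖y v - c‖ ^ 2
        = P v * ‖y v‖ ^ 2 - 2 * (P v * (inner ℝ (y v) c : ℝ)) + P v * ‖c‖ ^ 2 := by
      intro v
      rw [norm_sub_sq_real]
      ring
    rw [Finset.sum_congr rfl fun v _ => hexp v, Finset.sum_add_distrib,
      Finset.sum_sub_distrib, ← Finset.mul_sum, hinner, ← Finset.sum_mul]
    ring
  have hsq : ∑ v, P v * ‖y v‖ ^ 2 ≤ S * K ^ 2 := by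
    rw [hSdef, Finset.sum_mul]
    apply Finset.sum_le_sum
    intro v _
    exact mul_le_mul_of_nonneg_left
      (pow_le_pow_left₀ (norm_nonneg _) (hyb v) 2) (hP0 v)
  have hc2 : ‖c‖ ^ 2 ≤ (S * K) ^ 2 := pow_le_pow_left₀ (norm_nonneg c) hcb 2
  have hterm : (S - 2) * ‖c‖ ^ 2 ≤ θ * (S - 1) ^ 2 * K ^ 2 := by
    rcases le_or_gt S 2 with hS2 | hS2
    · have h1 : (S - 2) * ‖c‖ ^ 2 ≤ 0 :=
        mul_nonpos_of_nonpos_of_nonneg (by linarith) (sq_nonneg _)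
      have h2 : (0:ℝ) ≤ θ * (S - 1) ^ 2 * K ^ 2 := by positivity
      linarith
    · calc (S - 2) * ‖c‖ ^ 2 ≤ (S - 2) * (S * K) ^ 2 :=
          mul_le_mul_of_nonneg_left hc2 (by linarith)
      _ ≤ θ * (S - 1) ^ 2 * K ^ 2 := by
          nlinarith [mul_nonneg (sub_nonneg.2 hSθ) (mul_nonneg (sq_nonneg (S - 1)) (sq_nonneg K)),
            mul_nonneg hS0 (sq_nonneg K)]
  have hsum : ∑ v, P v * ‖wbar t - w v t‖ ^ 2
      = η ^ 2 * ∑ v, P v * ‖y v - c‖ ^ 2 := by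
    rw [Finset.mul_sum]
    apply Finset.sum_congr rfl
    intro v _
    rw [hdiff v, norm_smul, Real.norm_eq_abs, abs_of_pos hη, mul_pow]
    ring
  rw [hsum, hkey]
  have hfinal : (∑ v, P v * ‖y v‖ ^ 2) + (S - 2) * ‖c‖ ^ 2
      ≤ (E : ℝ) ^ 2 * G ^ 2 * (θ * (S - 1) ^ 2 + S) := by
    have : (E : ℝ) ^ 2 * G ^ 2 * (θ * (S - 1) ^ 2 + S)
        = θ * (S - 1) ^ 2 * K ^ 2 + S * K ^ 2 := by rw [hK]; ring
    rw [this]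
    linarith
  calc η ^ 2 * ((∑ v, P v * ‖y v‖ ^ 2) + (S - 2) * ‖c‖ ^ 2)
      ≤ η ^ 2 * ((E : ℝ) ^ 2 * G ^ 2 * (θ * (S - 1) ^ 2 + S)) :=
        mul_le_mul_of_nonneg_left hfinal (sq_nonneg η)
    _ = η ^ 2 * (E : ℝ) ^ 2 * G ^ 2 * (θ * (S - 1) ^ 2 + S) := by ring
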